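/- Let f : ℕ → ℕ satisfy f(n) ≥ n for all n, and let ℕ be partitioned into consecutive finite intervals. Then there exist two disjoint sets X and Y, each a union of infinitely many intervals of the partition, such that for all but finitely many p ∈ ℕ, either f(p) < ν_X(p) or f(p) < ν_Y(p). -/
import Mathlib


open Cardinal Set Filter

/-- A nonprincipal ultrafilter on ℕ: one that is not of the form `pure n`. -/
def Nonprincipal (U : Ultrafilter ℕ) : Prop := ∀ n : ℕ, U ≠ pure n

/-- `C` is cofinal in the ultrapower `U-prod ω` with respect to `≤_U`. -/
def UCofinal (U : Ultrafilter ℕ) (C : Set (ℕ → ℕ)) : Prop :=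
  ∀ f : ℕ → ℕ, ∃ g ∈ C, {n : ℕ | f n ≤ g n} ∈ U

/-- The cofinality of the ultrapower `U-prod ω`: the least cardinality of a
set of functions cofinal with respect to `≤_U`. -/
noncomputable def cfUProd (U : Ultrafilter ℕ) : Cardinal :=
  sInf {c : Cardinal | ∃ C : Set (ℕ → ℕ), UCofinal U C ∧ c = #C}

/-- The bounding number 𝔟. -/
noncomputable def boundingNumber : Cardinal :=
  sInf {c : Cardinal | ∃ B : Set (ℕ → ℕ),
    (∀ f : ℕ → ℕ, ∃ g ∈ B, {n : ℕ | f n ≤ g n}.Infinite) ∧ c = #B}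

/-- The dominating number 𝔡. -/
noncomputable def dominatingNumber : Cardinal :=
  sInf {c : Cardinal | ∃ D : Set (ℕ → ℕ),
    (∀ f : ℕ → ℕ, ∃ g ∈ D, {n : ℕ | ¬ f n ≤ g n}.Finite) ∧ c = #D}

/-- The splitting number 𝔰. -/
noncomputable def splittingNumber : Cardinal :=
  sInf {c : Cardinal | ∃ S : Set (Set ℕ),
    (∀ X : Set ℕ, X.Infinite → ∃ Y ∈ S, (X ∩ Y).Infinite ∧ (X \ Y).Infinite) ∧ c = #S}

/-- A family of infinite subsets of ℕ is groupwise dense if it is closed under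
infinite subsets and finite modifications and, for every partition of ℕ into
consecutive finite intervals (given by a strictly increasing sequence starting
at 0), the union of some infinitely many of the intervals is in the family. -/
def GroupwiseDense (G : Set (Set ℕ)) : Prop :=
  (∀ X ∈ G, X.Infinite) ∧
  (∀ X ∈ G, ∀ Y : Set ℕ, Y ⊆ X → Y.Infinite → Y ∈ G) ∧
  (∀ X ∈ G, ∀ Y : Set ℕ, (symmDiff X Y).Finite → Y ∈ G) ∧
  (∀ a : ℕ → ℕ, a 0 = 0 → StrictMono a →
    ∃ K : Set ℕ, K.Infinite ∧ (⋃ k ∈ K, Set.Ico (a k) (a (k + 1))) ∈ G)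

/-- The groupwise density number 𝔤. -/
noncomputable def groupwiseDensityNumber : Cardinal :=
  sInf {c : Cardinal | ∃ 𝒢 : Set (Set (Set ℕ)),
    (∀ G ∈ 𝒢, GroupwiseDense G) ∧ ⋂₀ 𝒢 = ∅ ∧ c = #𝒢}

/-- `U` is a pseudo-P_κ point. -/
def PseudoPPoint (U : Ultrafilter ℕ) (κ : Cardinal) : Prop :=
  ∀ F : Set (Set ℕ), (∀ A ∈ F, A ∈ U) → #F < κ →
    ∃ A : Set ℕ, A.Infinite ∧ ∀ B ∈ F, (A \ B).Finite

/-- A finite-to-one function on ℕ. -/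
def FinToOne (f : ℕ → ℕ) : Prop := ∀ n : ℕ, (f ⁻¹' {n}).Finite

/-- Two ultrafilters are nearly coherent if they have a common image under
finite-to-one maps. -/
def NearlyCoherent (U U' : Ultrafilter ℕ) : Prop :=
  ∃ f f' : ℕ → ℕ, FinToOne f ∧ FinToOne f' ∧
    Ultrafilter.map f U = Ultrafilter.map f' U'

/-- `nuX X n` is the least element of `X` greater than `n`. -/
noncomputable def nuX (X : Set ℕ) (n : ℕ) : ℕ := sInf {m : ℕ | m ∈ X ∧ n < m}


noncomputable def bseq (f a : ℕ → ℕ) : ℕ → ℕ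
  | 0 => 0
  | i + 1 => max (bseq f a i + 1) ((Finset.range (a (bseq f a i + 1) + 1)).sup f + 1)

lemma bseq_mono (f a : ℕ → ℕ) : StrictMono (bseq f a) :=
  strictMono_nat_of_lt_succ fun i =>
    lt_of_lt_of_le (Nat.lt_succ_self _) (le_max_left _ _)

lemma bseq_key (f a : ℕ → ℕ) (ha : StrictMono a) (i p : ℕ)
    (hp : p ≤ a (bseq f a i + 1)) : f p < a (bseq f a (i + 1)) := by
  have h1 : f p ≤ (Finset.range (a (bseq f a i + 1) + 1)).sup f :=
    Finset.le_sup (Finset.mem_range.mpr (Nat.lt_succ_of_le hp))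
  have h2 : (Finset.range (a (bseq f a i + 1) + 1)).sup f + 1 ≤ bseq f a (i + 1) :=
    le_max_right _ _
  have h3 : bseq f a (i + 1) ≤ a (bseq f a (i + 1)) := ha.le_apply
  omega

lemma nu_bound (f a : ℕ → ℕ) (ha : StrictMono a) (c : ℕ → ℕ) (p i : ℕ)
    (hc : ∀ j, c j ≠ i) (hcu : ∀ j, j ≤ c j)
    (hmin : ∀ i' < i, a (bseq f a i' + 1) ≤ p) :
    a (bseq f a (i + 1)) ≤
      nuX (⋃ k ∈ Set.range (fun j => bseq f a (c j)), Set.Ico (a k) (a (k + 1))) p := by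
  set S := {m : ℕ | m ∈ (⋃ k ∈ Set.range (fun j => bseq f a (c j)), Set.Ico (a k) (a (k + 1))) ∧ p < m} with hS
  have hne : S.Nonempty := by
    refine ⟨a (bseq f a (c (p + 1))), ?_, ?_⟩
    · simp only [Set.mem_iUnion, Set.mem_range, exists_prop]
      exact ⟨bseq f a (c (p + 1)), ⟨p + 1, rfl⟩,
        Set.mem_Ico.mpr ⟨le_refl _, ha (Nat.lt_succ_self _)⟩⟩
    · have h1 : c (p + 1) ≤ bseq f a (c (p + 1)) := (bseq_mono f a).le_apply
      have h2 : bseq f a (c (p + 1)) ≤ a (bseq f a (c (p + 1))) := ha.le_apply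
      have := hcu (p + 1)
      omega
  have hlb : ∀ m ∈ S, a (bseq f a (i + 1)) ≤ m := by
    rintro m ⟨hm, hpm⟩
    simp only [Set.mem_iUnion, Set.mem_range, exists_prop] at hm
    obtain ⟨k, ⟨j, rfl⟩, hk1, hk2⟩ := hm
    have hji : i < c j := by
      rcases lt_trichotomy (c j) i with h | h | h
      · have := hmin (c j) h
        have : a (bseq f a (c j) + 1) ≤ p := this
        have hk2' : m < a (bseq f a (c j) + 1) := hk2
        omega
      · exact absurd h (hc j)
      · exact h
    have : bseq f a (i + 1) ≤ bseq f a (c j) := (bseq_mono f a).monotone hji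
    calc a (bseq f a (i + 1)) ≤ a (bseq f a (c j)) := ha.monotone this
      _ ≤ m := hk1
  have : sInf S ∈ S := Nat.sInf_mem hne
  exact hlb _ this

/-- Given f with f(n) ≥ n and a partition of ℕ into consecutive finite
intervals, there are two disjoint sets X and Y, each a union of infinitely
many intervals of the partition, such that for all but finitely many p,
either f(p) < ν_X(p) or f(p) < ν_Y(p). -/
theorem stmt_8 (f : ℕ → ℕ) (hf : ∀ n : ℕ, n ≤ f n)
    (a : ℕ → ℕ) (ha0 : a 0 = 0) (ha : StrictMono a) :
    ∃ K L : Set ℕ, K.Infinite ∧ L.Infinite ∧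
      Disjoint (⋃ k ∈ K, Set.Ico (a k) (a (k + 1)))
        (⋃ k ∈ L, Set.Ico (a k) (a (k + 1))) ∧
      ∀ᶠ p in Filter.cofinite,
        f p < nuX (⋃ k ∈ K, Set.Ico (a k) (a (k + 1))) p ∨
        f p < nuX (⋃ k ∈ L, Set.Ico (a k) (a (k + 1))) p := by
  classical
  refine ⟨Set.range (fun j => bseq f a (2 * j)), Set.range (fun j => bseq f a (2 * j + 1)),
    ?_, ?_, ?_, ?_⟩
  · exact Set.infinite_range_of_injective fun x y h => by
      have := (bseq_mono f a).injective h; omega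
  · exact Set.infinite_range_of_injective fun x y h => by
      have := (bseq_mono f a).injective h; omega
  · rw [Set.disjoint_left]
    rintro x hx hx'
    simp only [Set.mem_iUnion, Set.mem_range, exists_prop, Set.mem_Ico] at hx hx'
    obtain ⟨k, ⟨j, rfl⟩, hk1, hk2⟩ := hx
    obtain ⟨l, ⟨m, rfl⟩, hl1, hl2⟩ := hx'
    have hne : bseq f a (2 * j) ≠ bseq f a (2 * m + 1) := fun h => by
      have := (bseq_mono f a).injective h; omega
    rcases lt_or_gt_of_ne hne with h | h
    · have : a (bseq f a (2 * j) + 1) ≤ a (bseq f a (2 * m + 1)) := ha.monotone h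
      omega
    · have : a (bseq f a (2 * m + 1) + 1) ≤ a (bseq f a (2 * j)) := ha.monotone h
      omega
  · refine Filter.Eventually.of_forall fun p => ?_
    have hex : ∃ i, p < a (bseq f a i + 1) := by
      refine ⟨p, ?_⟩
      have h1 : p ≤ bseq f a p := (bseq_mono f a).le_apply
      have h2 : bseq f a p + 1 ≤ a (bseq f a p + 1) := ha.le_apply
      omega
    set i := Nat.find hex with hi_def
    have hi : p < a (bseq f a i + 1) := Nat.find_spec hex
    have hmin : ∀ i' < i, a (bseq f a i' + 1) ≤ p := fun i' h =>
      not_lt.mp (Nat.find_min hex h)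
    have hfp : f p < a (bseq f a (i + 1)) := bseq_key f a ha i p hi.le
    rcases Nat.even_or_odd i with he | ho
    · right
      have hb := nu_bound f a ha (fun j => 2 * j + 1) p i
        (fun j h => by have h' : 2 * j + 1 = i := h; obtain ⟨r, hr⟩ := he; omega)
        (fun j => by show j ≤ 2 * j + 1; omega) hmin
      exact hfp.trans_le hb
    · left
      have hb := nu_bound f a ha (fun j => 2 * j) p i
        (fun j h => by have h' : 2 * j = i := h; obtain ⟨r, hr⟩ := ho; omega)
        (fun j => by show j ≤ 2 * j; omega) hmin
      exact hfp.trans_le hb
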